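/- Define polynomial functions of (ξ₁, ξ₂, ξ₃) ∈ ℂ³ by ψ₂ = ξ₁² + ξ₂² + ξ₃², ψ₄ = ξ₁²ξ₂² + ξ₁²ξ₃² + ξ₂²ξ₃² − (5/16)·(ξ₁² + ξ₂² + ξ₃²)², ψ₆ = ξ₁²ξ₂²ξ₃² − (3/8)·(ξ₁² + ξ₂² + ξ₃²)·(ξ₁²ξ₂² + ξ₁²ξ₃² + ξ₂²ξ₃²) + (11/128)·(ξ₁² + ξ₂² + ξ₃²)³, and ψ₈ = −(1/8)·(ξ₁² + ξ₂² + ξ₃²)·ξ₁²ξ₂²ξ₃² − (1/16)·(ξ₁²ξ₂² + ξ₁²ξ₃² + ξ₂²ξ₃²)² + (9/128)·(ξ₁²ξ₂² + ξ₁²ξ₃² + ξ₂²ξ₃²)·(ξ₁² + ξ₂² + ξ₃²)² − (51/4096)·(ξ₁² + ξ₂² + ξ₃²)⁴. Then for all (ξ₁, ξ₂, ξ₃) ∈ ℂ³, ψ₈ = −(1/2048)·ψ₂⁴ − (1/8)·ψ₂·ψ₆ − (1/64)·ψ₂²·ψ₄ − (1/16)·ψ₄². -/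
import Mathlib


/-- Relation among the flat coordinates of type D₅ restricted to H_{α₄} ∩ H_{α₅}. -/
theorem stmt_14 (ξ1 ξ2 ξ3 : ℂ)
    (ψ2 ψ4 ψ6 ψ8 : ℂ)
    (hψ2 : ψ2 = ξ1 ^ 2 + ξ2 ^ 2 + ξ3 ^ 2)
    (hψ4 : ψ4 = ξ1 ^ 2 * ξ2 ^ 2 + ξ1 ^ 2 * ξ3 ^ 2 + ξ2 ^ 2 * ξ3 ^ 2
      - (5/16) * (ξ1 ^ 2 + ξ2 ^ 2 + ξ3 ^ 2) ^ 2)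
    (hψ6 : ψ6 = ξ1 ^ 2 * ξ2 ^ 2 * ξ3 ^ 2
      - (3/8) * (ξ1 ^ 2 + ξ2 ^ 2 + ξ3 ^ 2)
          * (ξ1 ^ 2 * ξ2 ^ 2 + ξ1 ^ 2 * ξ3 ^ 2 + ξ2 ^ 2 * ξ3 ^ 2)
      + (11/128) * (ξ1 ^ 2 + ξ2 ^ 2 + ξ3 ^ 2) ^ 3)
    (hψ8 : ψ8 = -(1/8) * (ξ1 ^ 2 + ξ2 ^ 2 + ξ3 ^ 2) * (ξ1 ^ 2 * ξ2 ^ 2 * ξ3 ^ 2)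
      - (1/16) * (ξ1 ^ 2 * ξ2 ^ 2 + ξ1 ^ 2 * ξ3 ^ 2 + ξ2 ^ 2 * ξ3 ^ 2) ^ 2
      + (9/128) * (ξ1 ^ 2 * ξ2 ^ 2 + ξ1 ^ 2 * ξ3 ^ 2 + ξ2 ^ 2 * ξ3 ^ 2)
          * (ξ1 ^ 2 + ξ2 ^ 2 + ξ3 ^ 2) ^ 2
      - (51/4096) * (ξ1 ^ 2 + ξ2 ^ 2 + ξ3 ^ 2) ^ 4) :
    ψ8 = -(1/2048) * ψ2 ^ 4 - (1/8) * ψ2 * ψ6 - (1/64) * ψ2 ^ 2 * ψ4 - (1/16) * ψ4 ^ 2 := by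
  subst hψ2 hψ4 hψ6 hψ8; ring
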